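/- Define $y(u) \in \mathbb{Q}((u))$ by $y(u)^2 = x(u)^5 - 1$ and leading term $-u^{-5}$, where $x(u) = u^{-2} + O(u)$ solves $x^2 (x')^2 = 4x^5 - 4$. Then $x'(u) = 2y(u)/x(u)$ and the coefficient of $u^{k-5}$ in $y(u)$ vanishes unless $10 \mid k$. -/

import Mathlib

open PowerSeries

section Aux

set_option linter.unusedSectionVars false

variable {K : Type*} [Field K] [CharZero K]

lemma coeff_X_mul_dX (f : K⟦X⟧) (n : ℕ) :
    coeff n (X * d⁄dX K f) = (n : K) * coeff n f := by
  cases n with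
  | zero => simp
  | succ n =>
    rw [coeff_succ_X_mul, PowerSeries.coeff_derivative]
    push_cast
    ring

lemma coeff_mul_of_lowzero (E F : K⟦X⟧) (n : ℕ) (h : ∀ m < n, coeff m E = 0) :
    coeff n (E * F) = coeff n E * constantCoeff F := by
  rw [PowerSeries.coeff_mul, Finset.sum_eq_single (n, 0)]
  · simp [coeff_zero_eq_constantCoeff]
  · rintro ⟨i, j⟩ hmem hne
    rw [Finset.HasAntidiagonal.mem_antidiagonal] at hmem
    have hi : i < n := by
      rcases Nat.lt_or_ge i n with h' | h'
      · exact h'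
      · exfalso; apply hne
        have : i = n := le_antisymm (by omega) h'
        subst this
        simp only [Prod.mk.injEq, true_and]
        omega
    rw [h i hi, zero_mul]
  · intro hmem
    exact absurd (Finset.HasAntidiagonal.mem_antidiagonal.mpr (by omega)) hmem

lemma ode_uniq (P Q : K⟦X⟧) (hP0 : constantCoeff P = 1) (hQ0 : constantCoeff Q = 1)
    (hodeP : P ^ 2 * (X * d⁄dX K P - 2 * P) ^ 2 = 4 * P ^ 5 - 4 * X ^ 10)
    (hodeQ : Q ^ 2 * (X * d⁄dX K Q - 2 * Q) ^ 2 = 4 * Q ^ 5 - 4 * X ^ 10) :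
    P = Q := by
  suffices h : ∀ n, coeff n P = coeff n Q by
    ext n; exact h n
  intro n
  induction n using Nat.strong_induction_on with
  | _ n IH =>
    have hdiff :
        (P - Q) * ((P + Q) * (X * d⁄dX K P - 2 * P) ^ 2)
          + (X * d⁄dX K P - X * d⁄dX K Q - 2 * (P - Q))
            * (((X * d⁄dX K P - 2 * P) + (X * d⁄dX K Q - 2 * Q)) * Q ^ 2)
        = (P - Q) * (4 * (P ^ 4 + P ^ 3 * Q + P ^ 2 * Q ^ 2 + P * Q ^ 3 + Q ^ 4)) := by
      linear_combination hodeP - hodeQ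
    have hElow : ∀ m < n, coeff m (P - Q) = 0 := by
      intro m hm
      rw [map_sub, IH m hm, sub_self]
    have hE2low : ∀ m < n,
        coeff m (X * d⁄dX K P - X * d⁄dX K Q - 2 * (P - Q)) = 0 := by
      intro m hm
      rw [map_sub, map_sub, coeff_X_mul_dX, coeff_X_mul_dX, two_mul, map_add,
        map_sub, IH m hm]
      ring
    have hc := congrArg (coeff n) hdiff
    rw [map_add, coeff_mul_of_lowzero _ _ _ hElow, coeff_mul_of_lowzero _ _ _ hE2low,
      coeff_mul_of_lowzero _ _ _ hElow] at hc
    have hcA : constantCoeff (X * d⁄dX K P - 2 * P) = -2 := by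
      rw [map_sub, map_mul, constantCoeff_X, zero_mul, map_mul, map_ofNat, hP0]
      norm_num
    have hcB : constantCoeff (X * d⁄dX K Q - 2 * Q) = -2 := by
      rw [map_sub, map_mul, constantCoeff_X, zero_mul, map_mul, map_ofNat, hQ0]
      norm_num
    have hc1 : constantCoeff ((P + Q) * (X * d⁄dX K P - 2 * P) ^ 2) = 8 := by
      rw [map_mul, map_add, map_pow, hP0, hQ0, hcA]; norm_num
    have hc2 : constantCoeff
        (((X * d⁄dX K P - 2 * P) + (X * d⁄dX K Q - 2 * Q)) * Q ^ 2) = -4 := by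
      rw [map_mul, map_add, map_pow, hQ0, hcA, hcB]; norm_num
    have hc3 : constantCoeff
        (4 * (P ^ 4 + P ^ 3 * Q + P ^ 2 * Q ^ 2 + P * Q ^ 3 + Q ^ 4)) = 20 := by
      rw [map_mul, map_ofNat]
      simp [hP0, hQ0]
      norm_num
    rw [hc1, hc2, hc3, map_sub, map_sub, map_sub, coeff_X_mul_dX, coeff_X_mul_dX,
      two_mul, map_add, map_sub] at hc
    have hne : (4 : K) * ((n : K) + 1) ≠ 0 := by
      apply mul_ne_zero
      · norm_num
      · exact Nat.cast_add_one_ne_zero n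
    have hfin : (4 : K) * ((n : K) + 1) * (coeff n P - coeff n Q) = 0 := by
      linear_combination -hc
    have := (mul_eq_zero.mp hfin).resolve_left hne
    exact sub_eq_zero.mp this

lemma X_mul_dX_rescale (c : K) (f : K⟦X⟧) :
    X * d⁄dX K (rescale c f) = rescale c (X * d⁄dX K f) := by
  ext n
  rw [coeff_X_mul_dX, coeff_rescale, coeff_rescale, coeff_X_mul_dX]
  ring

lemma map_dX (f : ℚ⟦X⟧) :
    PowerSeries.map (algebraMap ℚ K) (d⁄dX ℚ f)
      = d⁄dX K (PowerSeries.map (algebraMap ℚ K) f) := by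
  ext n
  rw [coeff_map, PowerSeries.coeff_derivative, PowerSeries.coeff_derivative, coeff_map,
    map_mul]
  push_cast
  ring

lemma rescale_X_pow_ten {c : K} (hc : c ^ 10 = 1) :
    rescale c (X ^ 10 : K⟦X⟧) = X ^ 10 := by
  rw [map_pow, rescale_X, mul_pow, ← map_pow, hc, map_one, one_mul]

lemma supp_P (P : ℚ⟦X⟧) (h0 : constantCoeff P = 1)
    (hode : P ^ 2 * (X * d⁄dX ℚ P - 2 * P) ^ 2 = 4 * P ^ 5 - 4 * X ^ 10) :
    ∀ m : ℕ, ¬ (10 ∣ m) → coeff m P = 0 := by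
  set ζ : ℂ := Complex.exp (2 * Real.pi * Complex.I / 10) with hζdef
  have hζ : IsPrimitiveRoot ζ 10 := Complex.isPrimitiveRoot_exp 10 (by norm_num)
  have hζ10 : ζ ^ 10 = 1 := hζ.pow_eq_one
  set μ : ℚ⟦X⟧ →+* ℂ⟦X⟧ := PowerSeries.map (algebraMap ℚ ℂ) with hμdef
  have hμcoeff : ∀ (m : ℕ) (f : ℚ⟦X⟧), coeff m (μ f) = algebraMap ℚ ℂ (coeff m f) := by
    intro m f
    rw [hμdef, coeff_map]
  have hμ0 : constantCoeff (μ P) = 1 := by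
    rw [← coeff_zero_eq_constantCoeff_apply, hμcoeff, coeff_zero_eq_constantCoeff_apply,
      h0, map_one]
  have hodeμ : (μ P) ^ 2 * (X * d⁄dX ℂ (μ P) - 2 * (μ P)) ^ 2
      = 4 * (μ P) ^ 5 - 4 * X ^ 10 := by
    have hm := congrArg μ hode
    simp only [map_mul, map_pow, map_sub, map_ofNat, hμdef, PowerSeries.map_X] at hm
    rw [map_dX] at hm
    exact hm
  have hρ0 : constantCoeff (rescale ζ (μ P)) = 1 := by
    rw [← coeff_zero_eq_constantCoeff_apply, coeff_rescale, pow_zero, one_mul,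
      coeff_zero_eq_constantCoeff_apply, hμ0]
  have hodeρ : (rescale ζ (μ P)) ^ 2
      * (X * d⁄dX ℂ (rescale ζ (μ P)) - 2 * (rescale ζ (μ P))) ^ 2
      = 4 * (rescale ζ (μ P)) ^ 5 - 4 * X ^ 10 := by
    have hm := congrArg (rescale ζ) hodeμ
    simp only [map_mul, map_pow, map_sub, map_ofNat] at hm
    have hcomb : rescale ζ (X : ℂ⟦X⟧) * rescale ζ (d⁄dX ℂ (μ P))
        = X * d⁄dX ℂ (rescale ζ (μ P)) := by
      rw [← map_mul, ← X_mul_dX_rescale]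
    have hXten : (rescale ζ (X : ℂ⟦X⟧)) ^ 10 = X ^ 10 := by
      rw [← map_pow, rescale_X_pow_ten hζ10]
    rw [hcomb, hXten] at hm
    exact hm
  have huniq : μ P = rescale ζ (μ P) := ode_uniq _ _ hμ0 hρ0 hodeμ hodeρ
  intro m hm
  have hc := congrArg (coeff m) huniq
  rw [coeff_rescale] at hc
  have hζm : ζ ^ m ≠ 1 := fun h => hm ((hζ.pow_eq_one_iff_dvd m).mp h)
  have hfac : (ζ ^ m - 1) * coeff m (μ P) = 0 := by linear_combination -hc
  have hz : coeff m (μ P) = 0 :=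
    (mul_eq_zero.mp hfac).resolve_left (sub_ne_zero.mpr hζm)
  rw [hμcoeff] at hz
  exact (algebraMap ℚ ℂ).injective (by rw [hz, map_zero])

lemma supp_mul (f g : ℚ⟦X⟧) (hf : ∀ m : ℕ, ¬ (10 ∣ m) → coeff m f = 0)
    (hg : ∀ m : ℕ, ¬ (10 ∣ m) → coeff m g = 0) :
    ∀ k : ℕ, ¬ (10 ∣ k) → coeff k (f * g) = 0 := by
  intro k hk
  rw [PowerSeries.coeff_mul]
  apply Finset.sum_eq_zero
  rintro ⟨i, j⟩ hmem
  rw [Finset.HasAntidiagonal.mem_antidiagonal] at hmem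
  by_cases hi : 10 ∣ i
  · have hj : ¬ 10 ∣ j := fun hj => hk (by omega : 10 ∣ k)
    rw [hg j hj, mul_zero]
  · rw [hf i hi, zero_mul]

end Aux

/-- Let `x = P/u²` solve `x² x'² = 4x⁵ - 4` and let `y = Y/u⁵` with
`y² = x⁵ - 1` (i.e. `Y² = P⁵ - u¹⁰`) and leading term `-u⁻⁵` (i.e. `Y(0) = -1`).
Then `x' = 2y/x` (i.e. `(u P' - 2P) P = 2 Y`) and the coefficient of
`u^(k-5)` in `y` (i.e. of `u^k` in `Y`) vanishes unless `10 ∣ k`. -/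
theorem y_series_properties (P Y : ℚ⟦X⟧)
    (h0 : constantCoeff P = 1) (h1 : coeff 1 P = 0) (h2 : coeff 2 P = 0)
    (hode : P ^ 2 * (X * d⁄dX ℚ P - 2 * P) ^ 2 = 4 * P ^ 5 - 4 * X ^ 10)
    (hY0 : constantCoeff Y = -1)
    (hY : Y ^ 2 = P ^ 5 - X ^ 10) :
    (X * d⁄dX ℚ P - 2 * P) * P = 2 * Y ∧
    ∀ k : ℕ, 0 < k → ¬ (10 ∣ k) → coeff k Y = 0 := by
  have key : ((X * d⁄dX ℚ P - 2 * P) * P - 2 * Y)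
      * ((X * d⁄dX ℚ P - 2 * P) * P + 2 * Y) = 0 := by
    linear_combination hode - 4 * hY
  have part1 : (X * d⁄dX ℚ P - 2 * P) * P = 2 * Y := by
    rcases mul_eq_zero.mp key with h | h
    · exact sub_eq_zero.mp h
    · exfalso
      have hc := congrArg (constantCoeff) h
      simp only [map_add, map_mul, map_sub, map_ofNat, constantCoeff_X, zero_mul,
        map_zero, h0, hY0] at hc
      norm_num at hc
  refine ⟨part1, ?_⟩
  intro k hk hdvd
  have hsP : ∀ m : ℕ, ¬ (10 ∣ m) → coeff m P = 0 := supp_P P h0 hode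
  have hsA : ∀ m : ℕ, ¬ (10 ∣ m) → coeff m (X * d⁄dX ℚ P - 2 * P) = 0 := by
    intro m hm
    rw [map_sub, coeff_X_mul_dX, two_mul, map_add, hsP m hm]
    ring
  have hAP : coeff k ((X * d⁄dX ℚ P - 2 * P) * P) = 0 :=
    supp_mul _ _ hsA hsP k hdvd
  rw [part1, two_mul, map_add] at hAP
  linarith
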